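/- Let y ∈ (−1, 1) with y ≠ 0. For δ > 0 put z_δ = (y + iδ)^{−2} ∈ ℂ and H_δ = (1 + √(1 − z_δ)) / ((1 + √(1 − z_δ))² − z_δ), where √ denotes the principal complex square root. Then lim_{δ → 0⁺} Im H_δ = −y / (2√(1 − y²)); consequently −(1/(π y)) · lim_{δ → 0⁺} Im H_δ = 1/(2π√(1 − y²)). -/

import Mathlib

open Filter

section Aux
open Complex

-- limit of cpow (1/2) from upper half plane at negative real c
lemma sqrt_lim_upper {α : Type*} {l : Filter α} {f : α → ℂ} {c : ℂ}
    (hre : c.re < 0) (him : c.im = 0)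
    (hf : Tendsto f l (nhds c)) (hup : ∀ᶠ x in l, 0 < (f x).im) :
    Tendsto (fun x => f x ^ ((1:ℂ)/2)) l
      (nhds (Real.sqrt (‖c‖) * Complex.I)) := by
  have h0 : ∀ᶠ x in l, f x ≠ 0 := hup.mono fun x hx => by
    intro h; rw [h] at hx; simp at hx
  have hlog : Tendsto (fun x => Complex.log (f x)) l
      (nhds (Real.log (‖c‖) + Real.pi * Complex.I)) := by
    apply (tendsto_log_nhdsWithin_im_nonneg_of_re_neg_of_im_zero hre him).comp
    rw [tendsto_nhdsWithin_iff]
    exact ⟨hf, hup.mono fun x hx => le_of_lt hx⟩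
  have hexp : Tendsto (fun x => Complex.exp (Complex.log (f x) * ((1:ℂ)/2))) l
      (nhds (Complex.exp ((Real.log (‖c‖) + Real.pi * Complex.I) * ((1:ℂ)/2)))) :=
    (Complex.continuous_exp.tendsto _).comp (hlog.mul_const _)
  have heq : Complex.exp ((Real.log (‖c‖) + Real.pi * Complex.I) * ((1:ℂ)/2))
      = Real.sqrt (‖c‖) * Complex.I := by
    rw [add_mul, Complex.exp_add]
    have h1 : ((Real.log (‖c‖) : ℂ)) * ((1:ℂ)/2)
        = ((Real.log (‖c‖) / 2 : ℝ) : ℂ) := by push_cast; ring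
    have h2 : (Real.pi : ℂ) * Complex.I * ((1:ℂ)/2) = ((Real.pi/2 : ℝ) : ℂ) * Complex.I := by
      push_cast; ring
    rw [h1, h2, Complex.exp_mul_I, ← Complex.ofReal_cos, ← Complex.ofReal_sin, Real.cos_pi_div_two, Real.sin_pi_div_two,
      ← Complex.ofReal_exp]
    have : Real.exp (Real.log (‖c‖) / 2) = Real.sqrt (‖c‖) := by
      have hc0 : ‖c‖ ≠ 0 := by
        simp only [norm_ne_zero_iff]; intro h; rw [h] at hre; simp at hre
      rw [Real.sqrt_eq_rpow, Real.rpow_def_of_pos (lt_of_le_of_ne (by positivity) (Ne.symm hc0))]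
      ring_nf
    rw [this]; push_cast; ring
  rw [← heq]
  apply hexp.congr' (h0.mono fun x hx => ?_)
  rw [Complex.cpow_def_of_ne_zero hx]

lemma sqrt_lim_lower {α : Type*} {l : Filter α} {f : α → ℂ} {c : ℂ}
    (hre : c.re < 0) (him : c.im = 0)
    (hf : Tendsto f l (nhds c)) (hup : ∀ᶠ x in l, (f x).im < 0) :
    Tendsto (fun x => f x ^ ((1:ℂ)/2)) l
      (nhds (-(Real.sqrt (‖c‖) * Complex.I))) := by
  have h0 : ∀ᶠ x in l, f x ≠ 0 := hup.mono fun x hx => by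
    intro h; rw [h] at hx; simp at hx
  have hlog : Tendsto (fun x => Complex.log (f x)) l
      (nhds (Real.log (‖c‖) - Real.pi * Complex.I)) := by
    apply (tendsto_log_nhdsWithin_im_neg_of_re_neg_of_im_zero hre him).comp
    rw [tendsto_nhdsWithin_iff]
    exact ⟨hf, hup⟩
  have hexp : Tendsto (fun x => Complex.exp (Complex.log (f x) * ((1:ℂ)/2))) l
      (nhds (Complex.exp ((Real.log (‖c‖) - Real.pi * Complex.I) * ((1:ℂ)/2)))) :=
    (Complex.continuous_exp.tendsto _).comp (hlog.mul_const _)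
  have heq : Complex.exp ((Real.log (‖c‖) - Real.pi * Complex.I) * ((1:ℂ)/2))
      = -(Real.sqrt (‖c‖) * Complex.I) := by
    rw [sub_mul, Complex.exp_sub]
    have h1 : ((Real.log (‖c‖) : ℂ)) * ((1:ℂ)/2)
        = ((Real.log (‖c‖) / 2 : ℝ) : ℂ) := by push_cast; ring
    have h2 : (Real.pi : ℂ) * Complex.I * ((1:ℂ)/2) = ((Real.pi/2 : ℝ) : ℂ) * Complex.I := by
      push_cast; ring
    rw [h1, h2, Complex.exp_mul_I, ← Complex.ofReal_cos, ← Complex.ofReal_sin,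
      Real.cos_pi_div_two, Real.sin_pi_div_two, ← Complex.ofReal_exp]
    have hc0 : ‖c‖ ≠ 0 := by
      simp only [norm_ne_zero_iff]; intro h; rw [h] at hre; simp at hre
    have : Real.exp (Real.log (‖c‖) / 2) = Real.sqrt (‖c‖) := by
      rw [Real.sqrt_eq_rpow, Real.rpow_def_of_pos (lt_of_le_of_ne (by positivity) (Ne.symm hc0))]
      ring_nf
    rw [this]
    push_cast
    rw [div_eq_mul_inv]
    have : ((0:ℂ) + 1*Complex.I)⁻¹ = -Complex.I := by
      simp
    rw [this]; ring
  rw [← heq]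
  apply hexp.congr' (h0.mono fun x hx => ?_)
  rw [Complex.cpow_def_of_ne_zero hx]

end Aux

/-- Sokhotsky–Weierstrass limit of the ballistic symbol inside the light cone:
for `y ∈ (−1,1)`, `y ≠ 0`, with `z_δ = (y + iδ)^{−2}` and
`H_δ = (1 + √(1 − z_δ))/((1 + √(1 − z_δ))² − z_δ)` (principal square root),
`Im H_δ → −y/(2√(1 − y²))` as `δ → 0⁺`, and consequently
`−(1/(π y)) lim Im H_δ = 1/(2π √(1 − y²))`. -/
theorem stmt8 (y : ℝ) (hy : y ∈ Set.Ioo (-1 : ℝ) 1) (hy0 : y ≠ 0) :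
    let z : ℝ → ℂ := fun δ => (((y : ℂ) + (δ : ℂ) * Complex.I) ^ 2)⁻¹
    let H : ℝ → ℂ := fun δ =>
      (1 + (1 - z δ) ^ ((1 : ℂ) / 2)) / ((1 + (1 - z δ) ^ ((1 : ℂ) / 2)) ^ 2 - z δ)
    Tendsto (fun δ => (H δ).im) (nhdsWithin 0 (Set.Ioi 0))
      (nhds (-y / (2 * Real.sqrt (1 - y ^ 2)))) ∧
    Tendsto (fun δ => -(1 / (Real.pi * y)) * (H δ).im) (nhdsWithin 0 (Set.Ioi 0))
      (nhds (1 / (2 * Real.pi * Real.sqrt (1 - y ^ 2)))) := by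
  intro z H
  obtain ⟨hy1, hy2⟩ := hy
  have hsq : (0:ℝ) < 1 - y^2 := by nlinarith
  have hs : 0 < Real.sqrt (1 - y^2) := Real.sqrt_pos.mpr hsq
  have hyC : (y:ℂ) ≠ 0 := Complex.ofReal_ne_zero.mpr hy0
  have hy2ne : (y:ℂ)^2 ≠ 0 := pow_ne_zero 2 hyC
  set a : ℝ := Real.sqrt (1 - y^2) / y with ha_def
  have ha0 : a ≠ 0 := div_ne_zero (ne_of_gt hs) hy0
  have ha2 : a^2 = (1 - y^2) / y^2 := by
    rw [ha_def, div_pow, Real.sq_sqrt hsq.le]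
  set c : ℂ := ((1 - (y^2)⁻¹ : ℝ) : ℂ) with hc_def
  have hcreR : (1 - (y^2)⁻¹ : ℝ) < 0 := by
    have h1 : 1 < (y^2)⁻¹ := by
      rw [lt_inv_comm₀ (by norm_num) (by positivity)]; nlinarith
    linarith
  have hcre : c.re < 0 := by rw [hc_def, Complex.ofReal_re]; exact hcreR
  have hcim : c.im = 0 := by rw [hc_def]; exact Complex.ofReal_im _
  have habs : Real.sqrt (‖c‖) = Real.sqrt (1 - y^2) / |y| := by
    have h1 : ‖c‖ = (1 - y^2)/y^2 := by
      rw [hc_def, Complex.norm_real, Real.norm_eq_abs, abs_of_neg hcreR]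
      field_simp; ring
    rw [h1, Real.sqrt_div hsq.le, Real.sqrt_sq_eq_abs]
  -- limit of z
  have hzlim : Tendsto z (nhdsWithin 0 (Set.Ioi 0)) (nhds (((y:ℂ)^2)⁻¹)) := by
    have hcont : Continuous fun δ : ℝ => (((y : ℂ) + (δ : ℂ) * Complex.I) ^ 2) := by
      continuity
    have := (hcont.tendsto 0).inv₀ (by simpa using hy2ne)
    simp only [Complex.ofReal_zero, zero_mul, add_zero] at this
    exact this.mono_left nhdsWithin_le_nhds
  have hflim : Tendsto (fun δ => 1 - z δ) (nhdsWithin 0 (Set.Ioi 0)) (nhds c) := by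
    have : c = 1 - ((y:ℂ)^2)⁻¹ := by
      rw [hc_def]; push_cast; ring
    rw [this]
    exact tendsto_const_nhds.sub hzlim
  -- sign of imaginary part
  have him : ∀ δ : ℝ, δ ∈ Set.Ioi (0:ℝ) →
      (1 - z δ).im = 2*y*δ / Complex.normSq (((y : ℂ) + (δ : ℂ) * Complex.I) ^ 2) := by
    intro δ hδ
    simp only [z, Complex.sub_im, Complex.one_im, Complex.inv_im, zero_sub]
    simp [pow_two, Complex.mul_im, Complex.add_re, Complex.add_im]
    ring
  have hne : ∀ δ : ℝ, δ ∈ Set.Ioi (0:ℝ) →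
      (0:ℝ) < Complex.normSq (((y : ℂ) + (δ : ℂ) * Complex.I) ^ 2) := by
    intro δ hδ
    apply Complex.normSq_pos.mpr
    apply pow_ne_zero
    intro h
    have := congrArg Complex.im h
    simp at this
    exact absurd this (ne_of_gt hδ)
  -- sqrt limit
  have hslim : Tendsto (fun δ => (1 - z δ) ^ ((1:ℂ)/2)) (nhdsWithin 0 (Set.Ioi 0))
      (nhds (((a : ℝ) : ℂ) * Complex.I)) := by
    rcases lt_or_gt_of_ne hy0 with hyneg | hypos
    · have hev : ∀ᶠ δ in nhdsWithin (0:ℝ) (Set.Ioi 0), (1 - z δ).im < 0 := by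
        filter_upwards [self_mem_nhdsWithin] with δ hδ
        rw [him δ hδ]
        have hδ' : (0:ℝ) < δ := hδ
        exact div_neg_of_neg_of_pos (by nlinarith) (hne δ hδ)
      have h := sqrt_lim_lower hcre hcim hflim hev
      convert h using 2
      rw [habs, abs_of_neg hyneg, ha_def]
      push_cast
      field_simp
    · have hev : ∀ᶠ δ in nhdsWithin (0:ℝ) (Set.Ioi 0), 0 < (1 - z δ).im := by
        filter_upwards [self_mem_nhdsWithin] with δ hδ
        rw [him δ hδ]
        have hδ' : (0:ℝ) < δ := hδ
        exact div_pos (by nlinarith) (hne δ hδ)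
      have h := sqrt_lim_upper hcre hcim hflim hev
      convert h using 2
      rw [habs, abs_of_pos hypos, ha_def]
  -- limit of H
  set s : ℂ := ((a : ℝ) : ℂ) * Complex.I with hs_def
  have haC : ((a:ℝ):ℂ)^2 = (((1 - y^2)/y^2 : ℝ) : ℂ) := by
    rw [← ha2]; push_cast; ring
  have hsne : (1 + s) ≠ 0 := by
    intro h
    have := congrArg Complex.re h
    simp [hs_def] at this
  have hdenom_eq : (1 + s)^2 - ((y:ℂ)^2)⁻¹ = 2 * s * (1 + s) := by
    have hinv : ((y:ℂ)^2)⁻¹ = 1 + ((a:ℝ):ℂ)^2 := by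
      rw [haC]; push_cast; field_simp; ring
    rw [hs_def, hinv]
    linear_combination (-((a:ℝ):ℂ)^2) * Complex.I_sq
  have hsne0 : s ≠ 0 := by
    rw [hs_def]
    exact mul_ne_zero (Complex.ofReal_ne_zero.mpr ha0) Complex.I_ne_zero
  have hdne : (1 + s)^2 - ((y:ℂ)^2)⁻¹ ≠ 0 := by
    rw [hdenom_eq]
    exact mul_ne_zero (mul_ne_zero two_ne_zero hsne0) hsne
  have hHlim : Tendsto H (nhdsWithin 0 (Set.Ioi 0))
      (nhds ((1 + s) / ((1 + s)^2 - ((y:ℂ)^2)⁻¹))) := by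
    apply Tendsto.div ((tendsto_const_nhds.add hslim))
      (((tendsto_const_nhds.add hslim).pow 2).sub hzlim) hdne
  have hval : (1 + s) / ((1 + s)^2 - ((y:ℂ)^2)⁻¹)
      = Complex.I * ((-(y/(2*Real.sqrt (1-y^2))) : ℝ) : ℂ) := by
    rw [hdenom_eq, mul_comm (2*s) (1+s), div_mul_eq_div_div, div_self hsne, hs_def,
      show (2:ℂ) * (((a:ℝ):ℂ) * Complex.I) = ((2*a : ℝ):ℂ) * Complex.I by push_cast; ring,
      one_div, mul_inv, Complex.inv_I, ← Complex.ofReal_inv,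
      show (2*a)⁻¹ = y/(2*Real.sqrt (1-y^2)) by rw [ha_def]; field_simp,
      Complex.ofReal_neg]
    ring
  rw [hval] at hHlim
  have h2 : (Complex.I * ((-(y/(2*Real.sqrt (1-y^2))) : ℝ) : ℂ)).im
      = -y / (2*Real.sqrt (1-y^2)) := by
    simp only [Complex.mul_im, Complex.I_re, Complex.I_im, Complex.ofReal_re,
      Complex.ofReal_im, zero_mul, one_mul, mul_zero, add_zero, zero_add]
    rw [neg_div]
  have hIm : Tendsto (fun δ => (H δ).im) (nhdsWithin 0 (Set.Ioi 0))
      (nhds (-y / (2 * Real.sqrt (1 - y ^ 2)))) := by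
    rw [← h2]
    exact (Complex.continuous_im.tendsto _).comp hHlim
  refine ⟨hIm, ?_⟩
  have h3 := hIm.const_mul (-(1 / (Real.pi * y)))
  have h4 : -(1 / (Real.pi * y)) * (-y / (2 * Real.sqrt (1 - y ^ 2)))
      = 1 / (2 * Real.pi * Real.sqrt (1 - y ^ 2)) := by
    have hpi : Real.pi ≠ 0 := Real.pi_ne_zero
    field_simp
  rw [← h4]
  exact h3
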